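/- arXiv:2503.06993 — 2 statements merged into one kernel-verified Lean document; each statement's English description precedes it below -/
import Mathlib

section
/- Let K and C be positive natural numbers, let v₁, …, v_C be vectors in a real inner product space with ‖v_c‖ ≤ G for every c and some G ≥ 0. For each client k ∈ {1, …, K} let (π_c^k)_{c=1}^C be a probability vector, let (π_c)_{c=1}^C be a probability vector, and define ∇F_k = ∑_{c=1}^C π_c^k v_c and ∇F = ∑_{c=1}^C π_c v_c. Define the between-client gradient diversity δ_s² = (1/K) ∑_{k=1}^K ‖∇F_k − ∇F‖² and the distribution discrepancy Δ_π² = (1/K) ∑_{k=1}^K ∑_{c=1}^C (π_c^k − π_c)². Then δ_s² ≤ G² · C · Δ_π². Moreover, if the vectors v₁, …, v_C are pairwise orthogonal, then δ_s² ≤ G² · Δ_π². (Convergence Difficulty in Traditional Prompt Tuning: the between-client gradient variance term that slows convergence is bounded by the class-proportion discrepancy across clients.) -/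
open Finset

lemma key_norm_bound {E : Type*} [NormedAddCommGroup E] [InnerProductSpace ℝ E]
    {C : ℕ} (v : Fin C → E) {G : ℝ} (hG : 0 ≤ G) (hv : ∀ c, ‖v c‖ ≤ G)
    (a : Fin C → ℝ) :
    ‖∑ c, a c • v c‖ ^ 2 ≤ G ^ 2 * C * ∑ c, (a c) ^ 2 := by
  have h1 : ‖∑ c, a c • v c‖ ≤ G * ∑ c, |a c| := by
    calc ‖∑ c, a c • v c‖ ≤ ∑ c, ‖a c • v c‖ := norm_sum_le _ _
      _ ≤ ∑ c, |a c| * G := by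
          refine Finset.sum_le_sum fun c _ => ?_
          rw [norm_smul, Real.norm_eq_abs]
          exact mul_le_mul_of_nonneg_left (hv c) (abs_nonneg _)
      _ = G * ∑ c, |a c| := by rw [← Finset.sum_mul, mul_comm]
  have h2 : ‖∑ c, a c • v c‖ ^ 2 ≤ (G * ∑ c, |a c|) ^ 2 := by
    apply pow_le_pow_left₀ (norm_nonneg _) h1
  have h3 : (∑ c, |a c|) ^ 2 ≤ C * ∑ c, (a c) ^ 2 := by
    have := sq_sum_le_card_mul_sum_sq (s := (univ : Finset (Fin C))) (f := fun c => |a c|)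
    simpa [sq_abs] using this
  calc ‖∑ c, a c • v c‖ ^ 2 ≤ (G * ∑ c, |a c|) ^ 2 := h2
    _ = G ^ 2 * (∑ c, |a c|) ^ 2 := by ring
    _ ≤ G ^ 2 * (C * ∑ c, (a c) ^ 2) := by
        exact mul_le_mul_of_nonneg_left h3 (sq_nonneg G)
    _ = G ^ 2 * C * ∑ c, (a c) ^ 2 := by ring

lemma key_orth_bound {E : Type*} [NormedAddCommGroup E] [InnerProductSpace ℝ E]
    {C : ℕ} (v : Fin C → E) {G : ℝ} (hG : 0 ≤ G) (hv : ∀ c, ‖v c‖ ≤ G)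
    (horth : ∀ c c', c ≠ c' → inner ℝ (v c) (v c') = (0 : ℝ))
    (a : Fin C → ℝ) :
    ‖∑ c, a c • v c‖ ^ 2 ≤ G ^ 2 * ∑ c, (a c) ^ 2 := by
  have hx : ‖∑ c, a c • v c‖ ^ 2 = ∑ c, (a c)^2 * ‖v c‖^2 := by
    rw [← real_inner_self_eq_norm_sq]
    rw [inner_sum]
    refine Finset.sum_congr rfl fun c _ => ?_
    rw [sum_inner]
    rw [Finset.sum_eq_single c]
    · rw [real_inner_smul_left, real_inner_smul_right, real_inner_self_eq_norm_sq]; ring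
    · intro b _ hb
      rw [real_inner_smul_left, real_inner_smul_right, horth b c hb]; ring
    · simp
  rw [hx]
  calc ∑ c, (a c)^2 * ‖v c‖^2 ≤ ∑ c, (a c)^2 * G^2 := by
        refine Finset.sum_le_sum fun c _ => ?_
        exact mul_le_mul_of_nonneg_left (pow_le_pow_left₀ (norm_nonneg _) (hv c) 2) (sq_nonneg _)
    _ = G ^ 2 * ∑ c, (a c) ^ 2 := by rw [← Finset.sum_mul, mul_comm]

/-- Convergence Difficulty in Traditional Prompt Tuning: the between-client gradient
diversity `δ_s² = (1/K) ∑ₖ ‖∇F_k − ∇F‖²` is bounded by `G² · C · Δ_π²`, where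
`Δ_π² = (1/K) ∑ₖ ∑_c (π_c^k − π_c)²` is the distribution discrepancy; and if the
class-specific gradients are pairwise orthogonal, by `G² · Δ_π²`. -/
theorem convergence_difficulty_prompt_tuning
    {E : Type*} [NormedAddCommGroup E] [InnerProductSpace ℝ E]
    (K C : ℕ) (hK : 0 < K) (hC : 0 < C)
    (v : Fin C → E) (G : ℝ) (hG : 0 ≤ G) (hv : ∀ c, ‖v c‖ ≤ G)
    (πk : Fin K → Fin C → ℝ) (π : Fin C → ℝ)
    (hπk_nonneg : ∀ k c, 0 ≤ πk k c) (hπk_sum : ∀ k, ∑ c, πk k c = 1)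
    (hπ_nonneg : ∀ c, 0 ≤ π c) (hπ_sum : ∑ c, π c = 1) :
    (1 / (K : ℝ)) * ∑ k, ‖(∑ c, πk k c • v c) - ∑ c, π c • v c‖ ^ 2
      ≤ G ^ 2 * C * ((1 / (K : ℝ)) * ∑ k, ∑ c, (πk k c - π c) ^ 2) ∧
    ((∀ c c', c ≠ c' → inner ℝ (v c) (v c') = (0 : ℝ)) →
      (1 / (K : ℝ)) * ∑ k, ‖(∑ c, πk k c • v c) - ∑ c, π c • v c‖ ^ 2
        ≤ G ^ 2 * ((1 / (K : ℝ)) * ∑ k, ∑ c, (πk k c - π c) ^ 2)) := by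
  have hKinv : (0:ℝ) ≤ 1 / K := by positivity
  have hdiff : ∀ k, (∑ c, πk k c • v c) - ∑ c, π c • v c = ∑ c, (πk k c - π c) • v c := by
    intro k
    rw [← Finset.sum_sub_distrib]
    exact Finset.sum_congr rfl fun c _ => (sub_smul _ _ _).symm
  constructor
  · have h : ∀ k : Fin K, ‖(∑ c, πk k c • v c) - ∑ c, π c • v c‖ ^ 2
        ≤ G ^ 2 * C * ∑ c, (πk k c - π c) ^ 2 := by
      intro k; rw [hdiff k]; exact key_norm_bound v hG hv _
    calc (1 / (K : ℝ)) * ∑ k, ‖(∑ c, πk k c • v c) - ∑ c, π c • v c‖ ^ 2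
        ≤ (1 / (K : ℝ)) * ∑ k, (G ^ 2 * C * ∑ c, (πk k c - π c) ^ 2) :=
          mul_le_mul_of_nonneg_left (Finset.sum_le_sum fun k _ => h k) hKinv
      _ = G ^ 2 * C * ((1 / (K : ℝ)) * ∑ k, ∑ c, (πk k c - π c) ^ 2) := by
          rw [← Finset.mul_sum]; ring
  · intro horth
    have h : ∀ k : Fin K, ‖(∑ c, πk k c • v c) - ∑ c, π c • v c‖ ^ 2
        ≤ G ^ 2 * ∑ c, (πk k c - π c) ^ 2 := by
      intro k; rw [hdiff k]; exact key_orth_bound v hG hv horth _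
    calc (1 / (K : ℝ)) * ∑ k, ‖(∑ c, πk k c • v c) - ∑ c, π c • v c‖ ^ 2
        ≤ (1 / (K : ℝ)) * ∑ k, (G ^ 2 * ∑ c, (πk k c - π c) ^ 2) :=
          mul_le_mul_of_nonneg_left (Finset.sum_le_sum fun k _ => h k) hKinv
      _ = G ^ 2 * ((1 / (K : ℝ)) * ∑ k, ∑ c, (πk k c - π c) ^ 2) := by
          rw [← Finset.mul_sum]; ring
end

section
/- Let d be a positive natural number, let F : ℝ^d → ℝ be differentiable with L-Lipschitz gradient for some L > 0 and bounded below by F* ∈ ℝ. Let (Ω, ℱ, P) be a probability space with a filtration (ℱ_t)_{t≥0}, and let the SGD iterates be P_{t+1} = P_t − η g_t, where P_0 is deterministic, each P_t is ℱ_t-measurable, each g_t is ℱ_{t+1}-measurable and square-integrable with conditional mean E[g_t ∣ ℱ_t] = ∇F(P_t) and conditional variance bound E[‖g_t − ∇F(P_t)‖² ∣ ℱ_t] ≤ σ_tot² almost surely, and 0 < η ≤ 1/L. Then for every positive natural number T, (1/T) ∑_{t=0}^{T−1} E[‖∇F(P_t)‖²] ≤ 2 (F(P_0) − F*) / (η T)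 + η L σ_tot². (Impact on Convergence Rate: the total stochastic-gradient variance σ_tot² — which in the federated long-tailed setting equals the within-client variance σ² plus the between-client term G² h(ρ) growing with the imbalance ratio ρ — degrades the convergence rate of SGD.) -/
open MeasureTheory

section SGDAux

lemma sgd_aux_descent {d : ℕ} (F : EuclideanSpace ℝ (Fin d) → ℝ) (hF : Differentiable ℝ F)
    {L : ℝ} (hL : 0 ≤ L) (hlip : ∀ x y, ‖gradient F x - gradient F y‖ ≤ L * ‖x - y‖)
    (x v : EuclideanSpace ℝ (Fin d)) :
    F (x + v) ≤ F x + (inner ℝ (gradient F x) v : ℝ) + L / 2 * ‖v‖ ^ 2 := by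
  have gc : Continuous (gradient F) := by
    refine (LipschitzWith.of_dist_le_mul (K := ⟨L, hL⟩) fun a b => ?_).continuous
    rw [dist_eq_norm, dist_eq_norm]; exact hlip a b
  have key : ∀ s : ℝ, HasDerivAt (fun s : ℝ => F (x + s • v))
      (inner ℝ (gradient F (x + s • v)) v : ℝ) s := by
    intro s
    have h1 : HasFDerivAt F ((InnerProductSpace.toDual ℝ _) (gradient F (x + s • v)))
        (x + s • v) := (hF _).hasGradientAt
    have h2 : HasDerivAt (fun s : ℝ => x + s • v) v s := by
      simpa using ((hasDerivAt_id s).smul_const v).const_add x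
    simpa [InnerProductSpace.toDual_apply_apply, Function.comp_def] using h1.comp_hasDerivAt s h2
  have cont1 : Continuous fun s : ℝ => (inner ℝ (gradient F (x + s • v)) v : ℝ) :=
    (gc.comp (continuous_const.add (continuous_id'.smul continuous_const))).inner
      continuous_const
  have ftc : ∫ s in (0:ℝ)..1, (inner ℝ (gradient F (x + s • v)) v : ℝ) = F (x + v) - F x := by
    have := intervalIntegral.integral_eq_sub_of_hasDerivAt (f := fun s : ℝ => F (x + s • v))
      (fun s _ => key s) (cont1.intervalIntegrable 0 1)
    simpa using this
  have contg : Continuous fun s : ℝ => (inner ℝ (gradient F x) v : ℝ) + L * s * ‖v‖ ^ 2 :=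
    continuous_const.add ((continuous_const.mul continuous_id').mul continuous_const)
  have bound : ∀ s ∈ Set.Icc (0:ℝ) 1,
      (inner ℝ (gradient F (x + s • v)) v : ℝ)
        ≤ (inner ℝ (gradient F x) v : ℝ) + L * s * ‖v‖ ^ 2 := by
    intro s hs
    have h3 : (inner ℝ (gradient F (x + s • v)) v : ℝ) - (inner ℝ (gradient F x) v : ℝ)
        = (inner ℝ (gradient F (x + s • v) - gradient F x) v : ℝ) := (inner_sub_left _ _ _).symm
    have h4 : (inner ℝ (gradient F (x + s • v) - gradient F x) v : ℝ)
        ≤ ‖gradient F (x + s • v) - gradient F x‖ * ‖v‖ := real_inner_le_norm _ _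
    have h5 : ‖gradient F (x + s • v) - gradient F x‖ ≤ L * ‖s • v‖ := by
      simpa using hlip (x + s • v) x
    have h6 : ‖s • v‖ = s * ‖v‖ := by
      rw [norm_smul, Real.norm_eq_abs, abs_of_nonneg hs.1]
    have h7 := mul_le_mul_of_nonneg_right h5 (norm_nonneg v)
    rw [h6] at h7
    nlinarith [h7]
  have int_ineq := intervalIntegral.integral_mono_on (μ := MeasureTheory.volume) zero_le_one
    (cont1.intervalIntegrable 0 1) (contg.intervalIntegrable 0 1) bound
  have rhs : ∫ s in (0:ℝ)..1, ((inner ℝ (gradient F x) v : ℝ) + L * s * ‖v‖ ^ 2)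
      = (inner ℝ (gradient F x) v : ℝ) + L / 2 * ‖v‖ ^ 2 := by
    rw [intervalIntegral.integral_add
      ((continuous_const (y := (inner ℝ (gradient F x) v : ℝ))).intervalIntegrable 0 1)
      ((show Continuous fun s : ℝ => L * s * ‖v‖ ^ 2 from
        (continuous_const.mul continuous_id').mul continuous_const).intervalIntegrable 0 1)]
    have h7 : (fun s : ℝ => L * s * ‖v‖ ^ 2) = fun s : ℝ => (L * ‖v‖ ^ 2) * s := by
      funext s; ring
    rw [h7, intervalIntegral.integral_const_mul, integral_id]
    simp; ring
  rw [ftc, rhs] at int_ineq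
  linarith

lemma sgd_aux_integrable_sq_norm {α : Type*} {m0 : MeasurableSpace α} {μ : Measure α}
    {E : Type*} [NormedAddCommGroup E] {f : α → E}
    (hf : MemLp f 2 μ) : Integrable (fun x => ‖f x‖ ^ 2) μ := by
  have h := hf.integrable_norm_rpow two_ne_zero ENNReal.ofNat_ne_top
  simpa [ENNReal.toReal_ofNat, Real.rpow_natCast] using h

lemma sgd_aux_integrable_inner {α : Type*} {m0 : MeasurableSpace α} {μ : Measure α}
    {E : Type*} [NormedAddCommGroup E]
    [InnerProductSpace ℝ E] {f g : α → E} (hf : MemLp f 2 μ) (hg : MemLp g 2 μ) :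
    Integrable (fun x => (inner ℝ (f x) (g x) : ℝ)) μ := by
  refine Integrable.mono' ((sgd_aux_integrable_sq_norm hf).add (sgd_aux_integrable_sq_norm hg))
    (hf.1.inner hg.1) ?_
  filter_upwards with x
  simp only [Pi.add_apply]
  have h1 : |(inner ℝ (f x) (g x) : ℝ)| ≤ ‖f x‖ * ‖g x‖ := abs_real_inner_le_norm _ _
  have h2 := norm_nonneg (f x); have h3 := norm_nonneg (g x)
  rw [Real.norm_eq_abs]
  nlinarith [sq_nonneg (‖f x‖ - ‖g x‖)]

lemma sgd_aux_integrable_mul {α : Type*} {m0 : MeasurableSpace α} {μ : Measure α}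
    {f g : α → ℝ} (hf : MemLp f 2 μ) (hg : MemLp g 2 μ) :
    Integrable (fun x => f x * g x) μ := by
  refine Integrable.mono' ((sgd_aux_integrable_sq_norm hf).add (sgd_aux_integrable_sq_norm hg))
    (hf.1.mul hg.1) ?_
  filter_upwards with x
  simp only [Pi.add_apply]
  simp only [Real.norm_eq_abs]
  rw [abs_mul]
  nlinarith [sq_nonneg (|f x| - |g x|), sq_abs (f x), sq_abs (g x), abs_nonneg (f x),
    abs_nonneg (g x)]

lemma sgd_aux_condexp_clm {β E E' : Type*}
    [NormedAddCommGroup E] [NormedSpace ℝ E] [CompleteSpace E]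
    [NormedAddCommGroup E'] [NormedSpace ℝ E'] [CompleteSpace E']
    {m mβ : MeasurableSpace β} {ν : Measure β} [IsFiniteMeasure ν] (hm : m ≤ mβ)
    (T : E →L[ℝ] E') {f : β → E} (hf : Integrable f ν) :
    ν[fun ω => T (f ω)|m] =ᵐ[ν] fun ω => T ((ν[f|m]) ω) := by
  refine (ae_eq_condExp_of_forall_setIntegral_eq hm (T.integrable_comp hf) ?_ ?_ ?_).symm
  · intro s _ _
    exact (T.integrable_comp integrable_condExp).integrableOn
  · intro s hs _
    calc ∫ x in s, T ((ν[f|m]) x) ∂ν = T (∫ x in s, (ν[f|m]) x ∂ν) :=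
          T.integral_comp_comm integrable_condExp.integrableOn
      _ = T (∫ x in s, f x ∂ν) := by rw [setIntegral_condExp hm hf hs]
      _ = ∫ x in s, T (f x) ∂ν := (T.integral_comp_comm hf.integrableOn).symm
  · exact StronglyMeasurable.aestronglyMeasurable
      (T.continuous.comp_stronglyMeasurable stronglyMeasurable_condExp)

lemma sgd_aux_integral_inner_eq {d : ℕ} {Ω : Type*} {m0 : MeasurableSpace Ω}
    {P : Measure Ω} [IsProbabilityMeasure P] {m : MeasurableSpace Ω} (hm : m ≤ m0)
    {h g : Ω → EuclideanSpace ℝ (Fin d)}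
    (hhm : StronglyMeasurable[m] h) (hh2 : MemLp h 2 P) (hg2 : MemLp g 2 P)
    (hmean : P[g|m] =ᵐ[P] h) :
    ∫ ω, (inner ℝ (h ω) (g ω) : ℝ) ∂P = ∫ ω, ‖h ω‖ ^ 2 ∂P := by
  have hgint : Integrable g P := hg2.integrable one_le_two
  have hco : ∀ (f : Ω → EuclideanSpace ℝ (Fin d)), MemLp f 2 P →
      ∀ i, MemLp (fun ω => f ω i) 2 P := by
    intro f hf i
    have := (EuclideanSpace.proj (𝕜 := ℝ) i).comp_memLp' hf
    simpa [Function.comp_def] using this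
  have hprodint : ∀ i, Integrable (fun ω => h ω i * g ω i) P := fun i =>
    sgd_aux_integrable_mul (hco h hh2 i) (hco g hg2 i)
  have hsqint : ∀ i, Integrable (fun ω => h ω i * h ω i) P := fun i =>
    sgd_aux_integrable_mul (hco h hh2 i) (hco h hh2 i)
  have key : ∀ i, ∫ ω, h ω i * g ω i ∂P = ∫ ω, h ω i * h ω i ∂P := by
    intro i
    have hgi : Integrable (fun ω => g ω i) P := (hco g hg2 i).integrable one_le_two
    have hcond : P[(fun ω => g ω i)|m] =ᵐ[P] fun ω => h ω i := by
      have h1 := sgd_aux_condexp_clm hm (EuclideanSpace.proj (𝕜 := ℝ) i) hgint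
      refine h1.trans ?_
      filter_upwards [hmean] with ω hω
      simp [hω]
    have hmi : StronglyMeasurable[m] (fun ω => h ω i) := by
      have := (EuclideanSpace.proj (𝕜 := ℝ) i).continuous.comp_stronglyMeasurable hhm
      simpa [Function.comp] using this
    have hprod' : Integrable ((fun ω => h ω i) * fun ω => g ω i) P := hprodint i
    have pull := condExp_mul_of_stronglyMeasurable_left hmi hprod' hgi
    calc ∫ ω, h ω i * g ω i ∂P
        = ∫ ω, (P[(fun ω => h ω i) * fun ω => g ω i|m]) ω ∂P :=
          (integral_condExp hm).symm
      _ = ∫ ω, h ω i * h ω i ∂P := by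
          refine integral_congr_ae ?_
          filter_upwards [pull, hcond] with ω hp hc
          rw [hp]
          simp only [Pi.mul_apply]
          rw [hc]
  have e1 : ∫ ω, (inner ℝ (h ω) (g ω) : ℝ) ∂P = ∑ i, ∫ ω, h ω i * g ω i ∂P := by
    rw [← integral_finset_sum _ (fun i _ => hprodint i)]
    refine integral_congr_ae (Filter.Eventually.of_forall fun ω => ?_)
    show (inner ℝ (h ω) (g ω) : ℝ) = ∑ i, h ω i * g ω i
    simp [PiLp.inner_apply, RCLike.inner_apply]
    exact Finset.sum_congr rfl fun i _ => mul_comm _ _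
  have e2 : ∫ ω, ‖h ω‖ ^ 2 ∂P = ∑ i, ∫ ω, h ω i * h ω i ∂P := by
    rw [← integral_finset_sum _ (fun i _ => hsqint i)]
    refine integral_congr_ae (Filter.Eventually.of_forall fun ω => ?_)
    show ‖h ω‖ ^ 2 = ∑ i, h ω i * h ω i
    rw [← real_inner_self_eq_norm_sq]
    simp [PiLp.inner_apply, RCLike.inner_apply]
    rw [EuclideanSpace.norm_sq_eq]; simp [Real.norm_eq_abs, sq]
  rw [e1, e2]
  exact Finset.sum_congr rfl fun i _ => key i

end SGDAux

/-- Impact on Convergence Rate: for SGD iterates `P_{t+1} = P_t − η g_t` on an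
`L`-smooth objective `F` bounded below by `F*`, where the stochastic gradients `g_t` are
adapted to a filtration, conditionally unbiased (`E[g_t | ℱ_t] = ∇F(P_t)`) and have
conditional variance at most `σ_tot²`, with `0 < η ≤ 1/L`, for every `T > 0`,
`(1/T) ∑_{t<T} E[‖∇F(P_t)‖²] ≤ 2 (F(P_0) − F*)/(η T) + η L σ_tot²`. -/
theorem sgd_convergence_rate_total_variance
    (d : ℕ) (hd : 0 < d) (F : EuclideanSpace ℝ (Fin d) → ℝ)
    (hF : Differentiable ℝ F) (L : ℝ) (hL : 0 < L)
    (hlip : ∀ x y, ‖gradient F x - gradient F y‖ ≤ L * ‖x - y‖)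
    (Fstar : ℝ) (hbdd : ∀ x, Fstar ≤ F x)
    {Ω : Type*} {m0 : MeasurableSpace Ω} (P : Measure Ω) [IsProbabilityMeasure P]
    (ℱ : Filtration ℕ m0)
    (η : ℝ) (hη : 0 < η) (hηL : η ≤ 1 / L)
    (σtot : ℝ) (hσ : 0 ≤ σtot)
    (p0 : EuclideanSpace ℝ (Fin d))
    (Piter : ℕ → Ω → EuclideanSpace ℝ (Fin d))
    (g : ℕ → Ω → EuclideanSpace ℝ (Fin d))
    (hP0 : Piter 0 = fun _ => p0)
    (hPrec : ∀ t ω, Piter (t + 1) ω = Piter t ω - η • g t ω)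
    (hPmeas : ∀ t, StronglyMeasurable[ℱ t] (Piter t))
    (hgmeas : ∀ t, StronglyMeasurable[ℱ (t + 1)] (g t))
    (hgL2 : ∀ t, MemLp (g t) 2 P)
    (hmean : ∀ t, P[g t | ℱ t] =ᵐ[P] fun ω => gradient F (Piter t ω))
    (hvar : ∀ t, ∀ᵐ ω ∂P,
      (P[fun ω' => ‖g t ω' - gradient F (Piter t ω')‖ ^ 2 | ℱ t]) ω ≤ σtot ^ 2) :
    ∀ T : ℕ, 0 < T →
      (1 / (T : ℝ)) * ∑ t ∈ Finset.range T, ∫ ω, ‖gradient F (Piter t ω)‖ ^ 2 ∂P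
        ≤ 2 * (F p0 - Fstar) / (η * T) + η * L * σtot ^ 2 := by
  have gradcont : Continuous (gradient F) := by
    refine (LipschitzWith.of_dist_le_mul (K := ⟨L, hL.le⟩) fun a b => ?_).continuous
    rw [dist_eq_norm, dist_eq_norm]; exact hlip a b
  -- iterates are in L²
  have memP : ∀ t, MemLp (Piter t) 2 P := by
    intro t; induction t with
    | zero => rw [hP0]; exact memLp_const p0
    | succ t ih =>
        have hrw : Piter (t + 1) = fun ω => Piter t ω - η • g t ω := funext (hPrec t)
        rw [hrw]
        exact ih.sub ((hgL2 t).const_smul η)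
  -- gradients along iterates
  have hGm : ∀ t, StronglyMeasurable[ℱ t] (fun ω => gradient F (Piter t ω)) := fun t =>
    gradcont.comp_stronglyMeasurable (hPmeas t)
  have hG2 : ∀ t, MemLp (fun ω => gradient F (Piter t ω)) 2 P := by
    intro t
    have hmaj : MemLp (fun ω => ‖gradient F p0‖ + L * ‖Piter t ω - p0‖) 2 P :=
      (memLp_const (‖gradient F p0‖)).add (((memP t).sub (memLp_const p0)).norm.const_mul L :
        MemLp (fun ω => L * ‖Piter t ω - p0‖) 2 P)
    refine MemLp.of_le_mul (c := 1) hmaj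
      (((hGm t).mono (ℱ.le t)).aestronglyMeasurable) ?_
    filter_upwards with ω
    have h5 : ‖gradient F (Piter t ω) - gradient F p0‖ ≤ L * ‖Piter t ω - p0‖ := hlip _ _
    have h6 : ‖gradient F (Piter t ω)‖
        ≤ ‖gradient F p0‖ + ‖gradient F (Piter t ω) - gradient F p0‖ :=
      norm_le_norm_add_norm_sub' _ _
    have h7 : 0 ≤ L * ‖Piter t ω - p0‖ := mul_nonneg hL.le (norm_nonneg _)
    rw [one_mul, Real.norm_eq_abs, abs_of_nonneg (by positivity)]
    linarith
  -- F along iterates is integrable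
  have hFint : ∀ t, Integrable (fun ω => F (Piter t ω)) P := by
    intro t
    have hsub : MemLp (fun ω => Piter t ω - p0) 2 P := (memP t).sub (memLp_const p0)
    have h1 : Integrable (fun ω => ‖Piter t ω - p0‖) P := hsub.norm.integrable one_le_two
    have h2 : Integrable (fun ω => ‖Piter t ω - p0‖ ^ 2) P := sgd_aux_integrable_sq_norm hsub
    have hmaj : Integrable (fun ω => |Fstar| + (|F p0| + ‖gradient F p0‖ * ‖Piter t ω - p0‖
        + L / 2 * ‖Piter t ω - p0‖ ^ 2)) P :=
      (integrable_const _).add (((integrable_const _).add (h1.const_mul _)).add (h2.const_mul _))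
    refine hmaj.mono'
      ((hF.continuous.comp_stronglyMeasurable ((hPmeas t).mono (ℱ.le t))).aestronglyMeasurable) ?_
    filter_upwards with ω
    have up : F (Piter t ω) ≤ F p0 + (inner ℝ (gradient F p0) (Piter t ω - p0) : ℝ)
        + L / 2 * ‖Piter t ω - p0‖ ^ 2 := by
      have := sgd_aux_descent F hF hL.le hlip p0 (Piter t ω - p0)
      simpa using this
    have lo : Fstar ≤ F (Piter t ω) := hbdd _
    have hin : (inner ℝ (gradient F p0) (Piter t ω - p0) : ℝ)
        ≤ ‖gradient F p0‖ * ‖Piter t ω - p0‖ := real_inner_le_norm _ _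
    have hnn1 : (0:ℝ) ≤ ‖gradient F p0‖ * ‖Piter t ω - p0‖ := by positivity
    have hnn2 : (0:ℝ) ≤ L / 2 * ‖Piter t ω - p0‖ ^ 2 := by positivity
    rw [Real.norm_eq_abs, abs_le]
    constructor
    · have h8 := neg_abs_le Fstar
      have h9 := abs_nonneg (F p0)
      linarith
    · have h8 := le_abs_self Fstar
      have h9 := le_abs_self (F p0)
      have h10 := abs_nonneg Fstar
      linarith
  -- cross term identity
  have cross : ∀ t, ∫ ω, (inner ℝ (gradient F (Piter t ω)) (g t ω) : ℝ) ∂P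
      = ∫ ω, ‖gradient F (Piter t ω)‖ ^ 2 ∂P := fun t =>
    sgd_aux_integral_inner_eq (ℱ.le t) (hGm t) (hG2 t) (hgL2 t) (hmean t)
  -- variance bound
  have varb : ∀ t, ∫ ω, ‖g t ω - gradient F (Piter t ω)‖ ^ 2 ∂P ≤ σtot ^ 2 := by
    intro t
    have hq : Integrable (fun ω => ‖g t ω - gradient F (Piter t ω)‖ ^ 2) P :=
      sgd_aux_integrable_sq_norm ((hgL2 t).sub (hG2 t))
    calc ∫ ω, ‖g t ω - gradient F (Piter t ω)‖ ^ 2 ∂P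
        = ∫ ω, (P[fun ω' => ‖g t ω' - gradient F (Piter t ω')‖ ^ 2|ℱ t]) ω ∂P :=
          (integral_condExp (ℱ.le t)).symm
      _ ≤ ∫ _, σtot ^ 2 ∂P :=
          integral_mono_ae integrable_condExp (integrable_const _) (hvar t)
      _ = σtot ^ 2 := by simp
  -- second moment bound
  have gsq : ∀ t, ∫ ω, ‖g t ω‖ ^ 2 ∂P
      ≤ ∫ ω, ‖gradient F (Piter t ω)‖ ^ 2 ∂P + σtot ^ 2 := by
    intro t
    have hq : Integrable (fun ω => ‖g t ω - gradient F (Piter t ω)‖ ^ 2) P :=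
      sgd_aux_integrable_sq_norm ((hgL2 t).sub (hG2 t))
    have hh : Integrable (fun ω => ‖gradient F (Piter t ω)‖ ^ 2) P :=
      sgd_aux_integrable_sq_norm (hG2 t)
    have hcrossint : Integrable (fun ω => (inner ℝ (gradient F (Piter t ω)) (g t ω) : ℝ)) P :=
      sgd_aux_integrable_inner (hG2 t) (hgL2 t)
    have expand : ∀ ω, ‖g t ω‖ ^ 2 = ‖g t ω - gradient F (Piter t ω)‖ ^ 2
        + 2 * (inner ℝ (gradient F (Piter t ω)) (g t ω) : ℝ)
        - ‖gradient F (Piter t ω)‖ ^ 2 := by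
      intro ω
      have hns := norm_sub_sq_real (g t ω) (gradient F (Piter t ω))
      have hsymm : (inner ℝ (g t ω) (gradient F (Piter t ω)) : ℝ)
          = (inner ℝ (gradient F (Piter t ω)) (g t ω) : ℝ) := real_inner_comm _ _
      rw [hsymm] at hns
      linarith
    have heq : ∫ ω, ‖g t ω‖ ^ 2 ∂P
        = ∫ ω, ‖g t ω - gradient F (Piter t ω)‖ ^ 2 ∂P
          + 2 * ∫ ω, (inner ℝ (gradient F (Piter t ω)) (g t ω) : ℝ) ∂P
          - ∫ ω, ‖gradient F (Piter t ω)‖ ^ 2 ∂P := by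
      have h2B : Integrable
          (fun ω => 2 * (inner ℝ (gradient F (Piter t ω)) (g t ω) : ℝ)) P :=
        hcrossint.const_mul 2
      have hq2 : Integrable (fun ω => ‖g t ω - gradient F (Piter t ω)‖ ^ 2
          + 2 * (inner ℝ (gradient F (Piter t ω)) (g t ω) : ℝ)) P := hq.add h2B
      rw [integral_congr_ae (Filter.Eventually.of_forall expand),
        integral_sub hq2 hh, integral_add hq h2B, integral_const_mul _ _]
    rw [heq, cross t]
    have := varb t
    linarith
  -- one-step descent
  have step : ∀ t, ∫ ω, F (Piter (t + 1) ω) ∂P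
      ≤ ∫ ω, F (Piter t ω) ∂P - η / 2 * ∫ ω, ‖gradient F (Piter t ω)‖ ^ 2 ∂P
        + L * η ^ 2 / 2 * σtot ^ 2 := by
    intro t
    have hcrossint : Integrable (fun ω => (inner ℝ (gradient F (Piter t ω)) (g t ω) : ℝ)) P :=
      sgd_aux_integrable_inner (hG2 t) (hgL2 t)
    have hgsqint : Integrable (fun ω => ‖g t ω‖ ^ 2) P := sgd_aux_integrable_sq_norm (hgL2 t)
    have pt : ∀ ω, F (Piter (t + 1) ω) ≤ F (Piter t ω)
        + (-η) * (inner ℝ (gradient F (Piter t ω)) (g t ω) : ℝ)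
        + (L * η ^ 2 / 2) * ‖g t ω‖ ^ 2 := by
      intro ω
      have hd := sgd_aux_descent F hF hL.le hlip (Piter t ω) (-(η • g t ω))
      have hrw : Piter t ω + -(η • g t ω) = Piter (t + 1) ω := by
        rw [hPrec t ω, sub_eq_add_neg]
      rw [hrw] at hd
      have hi : (inner ℝ (gradient F (Piter t ω)) (-(η • g t ω)) : ℝ)
          = (-η) * (inner ℝ (gradient F (Piter t ω)) (g t ω) : ℝ) := by
        rw [inner_neg_right, real_inner_smul_right]; ring
      have hn : ‖-(η • g t ω)‖ ^ 2 = η ^ 2 * ‖g t ω‖ ^ 2 := by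
        rw [norm_neg, norm_smul, Real.norm_eq_abs, mul_pow, sq_abs]
      rw [hi, hn] at hd
      nlinarith [hd]
    have hrhsint : Integrable (fun ω => F (Piter t ω)
        + (-η) * (inner ℝ (gradient F (Piter t ω)) (g t ω) : ℝ)
        + (L * η ^ 2 / 2) * ‖g t ω‖ ^ 2) P :=
      ((hFint t).add (hcrossint.const_mul _)).add (hgsqint.const_mul _)
    have hstep := integral_mono (hFint (t + 1)) hrhsint pt
    have hrhseq : ∫ ω, (F (Piter t ω)
        + (-η) * (inner ℝ (gradient F (Piter t ω)) (g t ω) : ℝ)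
        + (L * η ^ 2 / 2) * ‖g t ω‖ ^ 2) ∂P
        = ∫ ω, F (Piter t ω) ∂P
          + (-η) * ∫ ω, (inner ℝ (gradient F (Piter t ω)) (g t ω) : ℝ) ∂P
          + (L * η ^ 2 / 2) * ∫ ω, ‖g t ω‖ ^ 2 ∂P := by
      have hcm : Integrable
          (fun ω => (-η) * (inner ℝ (gradient F (Piter t ω)) (g t ω) : ℝ)) P :=
        hcrossint.const_mul _
      have hgm : Integrable (fun ω => (L * η ^ 2 / 2) * ‖g t ω‖ ^ 2) P :=
        hgsqint.const_mul _
      have hfc : Integrable (fun ω => F (Piter t ω)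
          + (-η) * (inner ℝ (gradient F (Piter t ω)) (g t ω) : ℝ)) P := (hFint t).add hcm
      rw [integral_add hfc hgm, integral_add (hFint t) hcm, integral_const_mul _ _,
        integral_const_mul _ _]
    rw [hrhseq, cross t] at hstep
    have hLη : L * η ≤ 1 := by
      have := mul_le_mul_of_nonneg_left hηL hL.le
      rwa [mul_one_div, div_self (ne_of_gt hL)] at this
    have hB : 0 ≤ ∫ ω, ‖gradient F (Piter t ω)‖ ^ 2 ∂P :=
      integral_nonneg fun ω => sq_nonneg _
    have hg2b := gsq t
    have hc : 0 ≤ L * η ^ 2 / 2 := by positivity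
    nlinarith [mul_le_mul_of_nonneg_left hg2b hc, mul_nonneg (mul_nonneg hL.le hη.le) hB]
  -- telescoping
  intro T hT
  have hT' : (0:ℝ) < (T : ℝ) := by exact_mod_cast hT
  have tel : η / 2 * ∑ t ∈ Finset.range T, ∫ ω, ‖gradient F (Piter t ω)‖ ^ 2 ∂P
      ≤ (F p0 - Fstar) + T * (L * η ^ 2 / 2 * σtot ^ 2) := by
    have hsum : ∑ t ∈ Finset.range T, (η / 2 * ∫ ω, ‖gradient F (Piter t ω)‖ ^ 2 ∂P)
        ≤ ∑ t ∈ Finset.range T, ((∫ ω, F (Piter t ω) ∂P - ∫ ω, F (Piter (t + 1) ω) ∂P)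
          + L * η ^ 2 / 2 * σtot ^ 2) := by
      refine Finset.sum_le_sum fun t _ => ?_
      have := step t
      linarith
    rw [Finset.sum_add_distrib, Finset.sum_range_sub' (fun t => ∫ ω, F (Piter t ω) ∂P),
      Finset.sum_const, Finset.card_range, nsmul_eq_mul] at hsum
    rw [Finset.mul_sum]
    have hA0 : ∫ ω, F (Piter 0 ω) ∂P = F p0 := by
      have hcongr : (fun ω : Ω => F (Piter 0 ω)) = fun _ => F p0 := by rw [hP0]
      rw [hcongr, integral_const]
      simp
    have hAT : Fstar ≤ ∫ ω, F (Piter T ω) ∂P := by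
      have h1 : ∫ (_ : Ω), Fstar ∂P = Fstar := by simp
      rw [← h1]
      exact integral_mono (integrable_const _) (hFint T) fun ω => hbdd _
    rw [hA0] at hsum
    calc ∑ t ∈ Finset.range T, (η / 2 * ∫ ω, ‖gradient F (Piter t ω)‖ ^ 2 ∂P)
        ≤ F p0 - ∫ ω, F (Piter T ω) ∂P + T * (L * η ^ 2 / 2 * σtot ^ 2) := hsum
      _ ≤ (F p0 - Fstar) + T * (L * η ^ 2 / 2 * σtot ^ 2) := by linarith
  -- final algebra
  set S := ∑ t ∈ Finset.range T, ∫ ω, ‖gradient F (Piter t ω)‖ ^ 2 ∂P with hS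
  set D := F p0 - Fstar with hD
  have hS2 : S ≤ 2 * D / η + T * (L * η * σtot ^ 2) := by
    have h2 : (2 / η) * ((η / 2) * S) = S := by field_simp
    calc S = (2 / η) * ((η / 2) * S) := h2.symm
      _ ≤ (2 / η) * (D + T * (L * η ^ 2 / 2 * σtot ^ 2)) :=
          mul_le_mul_of_nonneg_left tel (by positivity)
      _ = 2 * D / η + T * (L * η * σtot ^ 2) := by
          field_simp
  calc (1 / (T : ℝ)) * S ≤ (1 / (T : ℝ)) * (2 * D / η + T * (L * η * σtot ^ 2)) :=
        mul_le_mul_of_nonneg_left hS2 (by positivity)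
    _ = 2 * D / (η * T) + η * L * σtot ^ 2 := by
        field_simp
end
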